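/- Unit propagation decides Horn satisfiability: a Horn CNF formula F is unsatisfiable if and only if the empty clause is derivable from F using only unit resolution (resolution steps in which at least one premise is a unit clause). -/

import Mathlib

inductive Lit where
  | pos : ℕ → Lit
  | neg : ℕ → Lit
deriving DecidableEq

def Lit.var : Lit → ℕ
  | .pos n => n
  | .neg n => n

def Lit.isPos : Lit → Bool
  | .pos _ => true
  | .neg _ => false

def Lit.compl : Lit → Lit
  | .pos n => .neg n
  | .neg n => .pos n

abbrev Clause := Finset Lit

def Lit.eval (v : ℕ → Bool) : Lit → Bool
  | .pos n => v n
  | .neg n => !v n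

def Clause.sat (v : ℕ → Bool) (C : Clause) : Prop := ∃ l ∈ C, Lit.eval v l = true

abbrev CNF := Finset Clause

def CNF.sat (v : ℕ → Bool) (F : CNF) : Prop := ∀ C ∈ F, Clause.sat v C

def CNF.satisfiable (F : CNF) : Prop := ∃ v, CNF.sat v F

def Clause.isTauto (C : Clause) : Prop := ∃ n, Lit.pos n ∈ C ∧ Lit.neg n ∈ C

def Clause.isHorn (C : Clause) : Prop := (C.filter (fun l => Lit.isPos l = true)).card ≤ 1

def Clause.resolvent (C D : Clause) (x : ℕ) : Clause :=
  (C.erase (.pos x)) ∪ (D.erase (.neg x))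

/-- Derivability from `F` using unit resolution only: a unit clause `{l}` is
resolved with a clause containing the complementary literal, which is removed. -/
inductive UnitDeriv (F : CNF) : Clause → Prop
  | base {C : Clause} : C ∈ F → UnitDeriv F C
  | step {l : Lit} {C : Clause} :
      UnitDeriv F {l} → UnitDeriv F C → Lit.compl l ∈ C →
      UnitDeriv F (C.erase (Lit.compl l))


lemma eval_compl (v : ℕ → Bool) (l : Lit) : Lit.eval v l.compl = !Lit.eval v l := by
  cases l <;> simp [Lit.compl, Lit.eval]

lemma unitDeriv_sound {F : CNF} {C : Clause} (h : UnitDeriv F C) (v : ℕ → Bool)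
    (hv : CNF.sat v F) : Clause.sat v C := by
  induction h with
  | base hC => exact hv _ hC
  | step h1 h2 hmem ih1 ih2 =>
    obtain ⟨l', hl', he⟩ := ih2
    obtain ⟨l0, hl0, he0⟩ := ih1
    rw [Finset.mem_singleton] at hl0
    subst hl0
    refine ⟨l', Finset.mem_erase.mpr ⟨?_, hl'⟩, he⟩
    rintro rfl
    rw [eval_compl, he0] at he
    simp at he

lemma unitDeriv_strip (F : CNF) : ∀ C : Clause, UnitDeriv F C →
    (∀ n, Lit.neg n ∈ C → UnitDeriv F {Lit.pos n}) →
    UnitDeriv F (C.filter (fun l => Lit.isPos l = true)) := by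
  intro C
  induction C using Finset.strongInduction with
  | _ C ih =>
    intro hC hneg
    by_cases hex : ∃ n, Lit.neg n ∈ C
    · obtain ⟨n, hn⟩ := hex
      have hstep : UnitDeriv F (C.erase (Lit.neg n)) := by
        have := UnitDeriv.step (hneg n hn) hC (show Lit.compl (Lit.pos n) ∈ C from hn)
        simpa [Lit.compl] using this
      have hsub : C.erase (Lit.neg n) ⊂ C := Finset.erase_ssubset hn
      have hrec := ih _ hsub hstep (fun m hm => hneg m (Finset.mem_of_mem_erase hm))
      have heq : (C.erase (Lit.neg n)).filter (fun l => Lit.isPos l = true)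
          = C.filter (fun l => Lit.isPos l = true) := by
        rw [Finset.filter_erase]
        apply Finset.erase_eq_of_notMem
        rw [Finset.mem_filter]
        simp [Lit.isPos]
      rwa [heq] at hrec
    · have : C.filter (fun l => Lit.isPos l = true) = C := by
        apply Finset.filter_eq_self.mpr
        intro l hl
        cases l with
        | pos m => rfl
        | neg m => exact absurd ⟨m, hl⟩ hex
      rwa [this]

open Classical in
theorem stmt_7 (F : CNF) (hHorn : ∀ C ∈ F, Clause.isHorn C) :
    ¬ CNF.satisfiable F ↔ UnitDeriv F ∅ := by
  constructor
  · intro hunsat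
    by_contra hnd
    apply hunsat
    refine ⟨fun n => if UnitDeriv F {Lit.pos n} then true else false, ?_⟩
    intro C hC
    by_contra hCsat
    have hneg : ∀ n, Lit.neg n ∈ C → UnitDeriv F {Lit.pos n} := by
      intro n hn
      by_contra h
      exact hCsat ⟨_, hn, by simp [Lit.eval, h]⟩
    have hd := unitDeriv_strip F C (UnitDeriv.base hC) hneg
    set P := C.filter (fun l => Lit.isPos l = true) with hP
    rcases P.eq_empty_or_nonempty with he | ⟨l, hl⟩
    · exact hnd (he ▸ hd)
    · have hlC := Finset.mem_filter.mp hl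
      obtain ⟨hlC1, hlpos⟩ := hlC
      cases l with
      | neg m => simp [Lit.isPos] at hlpos
      | pos m =>
        have hcard := hHorn C hC
        have : P = {Lit.pos m} := by
          apply Finset.eq_singleton_iff_unique_mem.mpr
          refine ⟨hl, fun x hx => ?_⟩
          have h1 : P.card ≤ 1 := hcard
          exact Finset.card_le_one.mp h1 x hx _ hl
        rw [this] at hd
        exact hCsat ⟨Lit.pos m, hlC1, by simp [Lit.eval, hd]⟩
  · rintro hd ⟨v, hv⟩
    obtain ⟨l, hl, -⟩ := unitDeriv_sound hd v hv
    exact absurd hl (Finset.notMem_empty l)
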